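/- Let J : ℝ^d → ℝ be differentiable with L_g-Lipschitz gradient for some L_g > 0. Let α > 0, let θ, d ∈ ℝ^d, and set θ' = θ + α·d/‖d‖ (with the convention 0/‖0‖ = 0). Then −J(θ') ≤ −J(θ) − α‖∇J(θ)‖ + 2α‖d − ∇J(θ)‖ + L_g α²/2. -/

import Mathlib

set_option maxHeartbeats 1000000

open scoped RealInnerProductSpace

/-- Descent lemma: for `J` with `Lg`-Lipschitz gradient,
`J x + ⟪∇J x, w⟫ - Lg/2 ‖w‖² ≤ J (x + w)`. -/
lemma descent_aux {dim : ℕ}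
    (J : EuclideanSpace ℝ (Fin dim) → ℝ) (Lg : ℝ) (hLg : 0 ≤ Lg)
    (hdiff : Differentiable ℝ J)
    (hlip : ∀ x y, ‖gradient J x - gradient J y‖ ≤ Lg * ‖x - y‖)
    (x w : EuclideanSpace ℝ (Fin dim)) :
    J x + ⟪gradient J x, w⟫ - Lg / 2 * ‖w‖ ^ 2 ≤ J (x + w) := by
  set g := gradient J with hg
  set ψ : ℝ → ℝ := fun t => J (x + t • w) - t * ⟪g x, w⟫ + Lg * t ^ 2 / 2 * ‖w‖ ^ 2 with hψ
  have hderiv : ∀ t : ℝ, HasDerivAt ψ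
      (⟪g (x + t • w), w⟫ - ⟪g x, w⟫ + Lg * t * ‖w‖ ^ 2) t := by
    intro t
    have hline : HasDerivAt (fun t : ℝ => x + t • w) w t := by
      simpa using ((hasDerivAt_id t).smul_const w).const_add x
    have hJ : HasDerivAt (fun t : ℝ => J (x + t • w)) ⟪g (x + t • w), w⟫ t := by
      have := ((hdiff (x + t • w)).hasGradientAt.hasFDerivAt).comp_hasDerivAt t hline
      simpa [InnerProductSpace.toDual_apply_apply, hg, gradient, InnerProductSpace.toDual_symm_apply, Function.comp_def] using this
    have h2 : HasDerivAt (fun t : ℝ => t * ⟪g x, w⟫) ⟪g x, w⟫ t := by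
      simpa using (hasDerivAt_id t).mul_const ⟪g x, w⟫
    have h3 : HasDerivAt (fun t : ℝ => Lg * t ^ 2 / 2 * ‖w‖ ^ 2) (Lg * t * ‖w‖ ^ 2) t := by
      have : HasDerivAt (fun t : ℝ => t ^ 2) (2 * t) t := by
        simpa using hasDerivAt_pow 2 t
      have := ((this.const_mul Lg).div_const 2).mul_const (‖w‖ ^ 2)
      have e : Lg * t * ‖w‖ ^ 2 = Lg * (2 * t) / 2 * ‖w‖ ^ 2 := by ring
      rw [e]
      exact this
    exact (hJ.sub h2).add h3
  have hmono : MonotoneOn ψ (Set.Icc 0 1) := by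
    apply monotoneOn_of_deriv_nonneg (convex_Icc 0 1)
    · exact Continuous.continuousOn (by
        have : Continuous ψ := by
          apply Continuous.add
          · exact ((hdiff.continuous.comp (by continuity)).sub (by continuity))
          · continuity
        exact this)
    · intro t _
      exact (hderiv t).differentiableAt.differentiableWithinAt
    · intro t ht
      rw [interior_Icc] at ht
      rw [(hderiv t).deriv]
      have hlipb : ‖g (x + t • w) - g x‖ ≤ Lg * (t * ‖w‖) := by
        have := hlip (x + t • w) x
        simpa [norm_smul, abs_of_pos ht.1, mul_assoc] using this
      have hinner : ⟪g (x + t • w) - g x, w⟫ ≥ -(Lg * t * ‖w‖ ^ 2) := by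
        have hA := abs_real_inner_le_norm (g (x + t • w) - g x) w
        have hB := neg_abs_le ⟪g (x + t • w) - g x, w⟫
        have h1 : ⟪g (x + t • w) - g x, w⟫ ≥ -(‖g (x + t • w) - g x‖ * ‖w‖) := by
          linarith
        have h2 : ‖g (x + t • w) - g x‖ * ‖w‖ ≤ Lg * t * ‖w‖ ^ 2 := by
          have := mul_le_mul_of_nonneg_right hlipb (norm_nonneg w)
          nlinarith
        linarith
      have : ⟪g (x + t • w), w⟫ - ⟪g x, w⟫ = ⟪g (x + t • w) - g x, w⟫ := by
        rw [inner_sub_left]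
      linarith [this ▸ hinner]
  have h01 : ψ 0 ≤ ψ 1 := hmono (by norm_num) (by norm_num) (by norm_num)
  simp only [hψ, zero_smul, add_zero, one_smul, zero_mul, zero_pow, mul_zero, zero_div] at h01
  push_cast at h01
  nlinarith [h01]

/-- Descent lemma for the normalized step (Lemma 1, first form):
`−J(θ') ≤ −J(θ) − α‖∇J(θ)‖ + 2α‖d − ∇J(θ)‖ + L_g α²/2`. -/
theorem normalized_step_descent_gradient_form
    {dim : ℕ} (hdim : 0 < dim)
    (J : EuclideanSpace ℝ (Fin dim) → ℝ) (Lg : ℝ) (hLg : 0 < Lg)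
    (hdiff : Differentiable ℝ J)
    (hlip : ∀ x y, ‖gradient J x - gradient J y‖ ≤ Lg * ‖x - y‖)
    (α : ℝ) (hα : 0 < α) (θ dvec : EuclideanSpace ℝ (Fin dim))
    (θ' : EuclideanSpace ℝ (Fin dim))
    (hθ' : θ' = θ + α • (‖dvec‖⁻¹ • dvec)) :
    -J θ' ≤ -J θ - α * ‖gradient J θ‖ + 2 * α * ‖dvec - gradient J θ‖ + Lg * α ^ 2 / 2 := by
  set g := gradient J θ with hg
  set w : EuclideanSpace ℝ (Fin dim) := α • (‖dvec‖⁻¹ • dvec) with hw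
  have hkey := descent_aux J Lg hLg.le hdiff hlip θ w
  rw [hθ']
  have hwnorm : ‖w‖ ≤ α := by
    rcases eq_or_ne dvec 0 with h | h
    · simp [hw, h]; positivity
    · have : ‖w‖ = α := by
        rw [hw, norm_smul, norm_smul, norm_inv, norm_norm,
          inv_mul_cancel₀ (norm_ne_zero_iff.mpr h)]
        simp [abs_of_pos hα]
      linarith
  have hwsq : ‖w‖ ^ 2 ≤ α ^ 2 := by nlinarith [norm_nonneg w]
  have hinner : ⟪g, w⟫ ≥ α * ‖g‖ - 2 * α * ‖dvec - g‖ := by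
    rcases eq_or_ne dvec 0 with h | h
    · have : w = 0 := by simp [hw, h]
      rw [this, inner_zero_right]
      have : ‖dvec - g‖ = ‖g‖ := by rw [h]; simp
      rw [this]
      nlinarith [norm_nonneg g]
    · have hd : (0:ℝ) < ‖dvec‖ := norm_pos_iff.mpr h
      have hweq : w = (α * ‖dvec‖⁻¹) • dvec := by rw [hw, smul_smul]
      rw [hweq, real_inner_smul_right]
      have hsplit : ⟪g, dvec⟫ = ⟪dvec, dvec⟫ + ⟪g - dvec, dvec⟫ := by
        rw [inner_sub_left]; ring
      have h1 : ⟪g - dvec, dvec⟫ ≥ -(‖dvec - g‖ * ‖dvec‖) := by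
        have := abs_real_inner_le_norm (g - dvec) dvec
        have heq : ‖g - dvec‖ = ‖dvec - g‖ := norm_sub_rev _ _
        nlinarith [neg_abs_le ⟪g - dvec, dvec⟫]
      have h2 : ⟪dvec, dvec⟫ = ‖dvec‖ ^ 2 := real_inner_self_eq_norm_sq dvec
      have h3 : ‖g‖ ≤ ‖dvec‖ + ‖dvec - g‖ := by
        have := norm_sub_norm_le dvec g
        have := norm_sub_le dvec (dvec - g)
        calc ‖g‖ = ‖dvec - (dvec - g)‖ := by rw [sub_sub_cancel]
          _ ≤ ‖dvec‖ + ‖dvec - g‖ := norm_sub_le _ _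
      have h4 : ⟪g, dvec⟫ ≥ ‖dvec‖ ^ 2 - ‖dvec - g‖ * ‖dvec‖ := by
        rw [hsplit, h2]; linarith
      have h5 : α * ‖dvec‖⁻¹ * ⟪g, dvec⟫ ≥ α * ‖dvec‖⁻¹ * (‖dvec‖ ^ 2 - ‖dvec - g‖ * ‖dvec‖) := by
        apply mul_le_mul_of_nonneg_left h4 (by positivity)
      have h6 : α * ‖dvec‖⁻¹ * (‖dvec‖ ^ 2 - ‖dvec - g‖ * ‖dvec‖)
          = α * (‖dvec‖ - ‖dvec - g‖) := by
        field_simp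
      rw [h6] at h5
      nlinarith
  have hLw : Lg / 2 * ‖w‖ ^ 2 ≤ Lg * α ^ 2 / 2 := by nlinarith
  linarith [hkey]
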